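/- Let F = F(a₀, a₁) be the free group of rank 2, let θ be the automorphism of F determined by θ(a₀) = a₁ and θ(a₁) = a₁ a₀⁻¹ a₁, and let X = {θ^i(a₀) : i ∈ ℤ}. Then every element of X is a reduced word whose first and last letters are positive (i.e., lie in {a₀, a₁}), and consequently every finite product of elements of X is already a reduced word (there is no cancellation between consecutive factors). -/

import Mathlib

namespace Stmt12Aux

open FreeGroup List

/-- Reduced-word condition on adjacent letters. -/
abbrev R {α : Type*} (a b : α × Bool) : Prop := ¬(a.1 = b.1 ∧ a.2 = !b.2)

lemma reduce_eq_self {α : Type*} [DecidableEq α] :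
    ∀ {l : List (α × Bool)}, l.Chain' R → FreeGroup.reduce l = l := by
  intro l h
  induction l with
  | nil => rfl
  | cons x l ih =>
    obtain ⟨hx, hl⟩ := List.isChain_cons.mp h
    rw [FreeGroup.reduce.cons, ih hl]
    cases l with
    | nil => rfl
    | cons y t =>
      have := hx y rfl
      simp only [R] at this
      simp [this]

lemma chain'_of_reduce {α : Type*} [DecidableEq α] :
    ∀ {l : List (α × Bool)}, FreeGroup.reduce l = l → l.Chain' R := by
  intro l h
  induction l with
  | nil => exact List.isChain_nil
  | cons x l ih =>
    rw [FreeGroup.reduce.cons] at h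
    rcases hl : FreeGroup.reduce l with _ | ⟨y, t⟩
    · rw [hl] at h
      cases l with
      | nil => exact List.isChain_singleton x
      | cons a b => exfalso; dsimp only at h; simp at h
    · rw [hl] at h
      have hsub : (y :: t) <+ l := hl ▸ (FreeGroup.reduce.red (L := l)).sublist
      dsimp only at h
      split_ifs at h with hc
      · exfalso
        have h1 : t.length ≤ l.length - 1 := by
          have := hsub.length_le
          simp at this; omega
        have h2 : t.length = l.length + 1 := by
          have := congrArg List.length h
          simpa using this
        have : 0 < l.length := by
          have := hsub.length_le; simp at this; omega
        omega
      · have hl' : l = y :: t :=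
          (show y :: t = l by simpa using congrArg List.tail h).symm
        have : FreeGroup.reduce l = l := by rw [hl, hl']
        refine List.isChain_cons.mpr ⟨?_, ih this⟩
        intro z hz
        rw [hl'] at hz
        simp at hz
        subst hz
        exact hc

lemma toWord_mul_append {α : Type*} [DecidableEq α] {a b : FreeGroup α}
    (hj : ∀ p ∈ a.toWord.getLast?, ∀ q ∈ b.toWord.head?, R p q) :
    (a * b).toWord = a.toWord ++ b.toWord := by
  conv_lhs => rw [← FreeGroup.mk_toWord (x := a), ← FreeGroup.mk_toWord (x := b)]
  rw [FreeGroup.mul_mk, FreeGroup.toWord_mk]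
  exact reduce_eq_self
    (((chain'_of_reduce (FreeGroup.reduce_toWord a)).append
      (chain'_of_reduce (FreeGroup.reduce_toWord b))) hj)

/-- Word of `θ^(k+1)(a₀) = (a₁ a₀⁻¹)^k a₁`. -/
def PW : ℕ → List (Bool × Bool)
  | 0 => [(true, true)]
  | k + 1 => (true, true) :: (false, false) :: PW k

/-- Word of `θ^(-k)(a₀) = (a₀ a₁⁻¹)^k a₀`. -/
def NW : ℕ → List (Bool × Bool)
  | 0 => [(false, true)]
  | k + 1 => (false, true) :: (true, false) :: NW k

lemma PW_ne (k : ℕ) : PW k ≠ [] := by cases k <;> simp [PW]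
lemma NW_ne (k : ℕ) : NW k ≠ [] := by cases k <;> simp [NW]

lemma PW_head (k : ℕ) : (PW k).head? = some (true, true) := by cases k <;> rfl
lemma NW_head (k : ℕ) : (NW k).head? = some (false, true) := by cases k <;> rfl

lemma PW_last (k : ℕ) : (PW k).getLast? = some (true, true) := by
  induction k with
  | zero => rfl
  | succ k ih =>
    obtain ⟨x, l, hxl⟩ := List.exists_cons_of_ne_nil (PW_ne k)
    rw [PW, hxl, List.getLast?_cons_cons, List.getLast?_cons_cons, ← hxl, ih]

lemma NW_last (k : ℕ) : (NW k).getLast? = some (false, true) := by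
  induction k with
  | zero => rfl
  | succ k ih =>
    obtain ⟨x, l, hxl⟩ := List.exists_cons_of_ne_nil (NW_ne k)
    rw [NW, hxl, List.getLast?_cons_cons, List.getLast?_cons_cons, ← hxl, ih]

lemma PW_chain (k : ℕ) : (PW k).Chain' R := by
  induction k with
  | zero => simp [PW, List.Chain']
  | succ k ih =>
    rw [PW]
    refine List.isChain_cons_cons.mpr ⟨by simp [R], List.isChain_cons.mpr ⟨?_, ih⟩⟩
    intro y hy
    rw [PW_head k] at hy
    simp at hy
    subst hy
    simp [R]

lemma NW_chain (k : ℕ) : (NW k).Chain' R := by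
  induction k with
  | zero => simp [NW, List.Chain']
  | succ k ih =>
    rw [NW]
    refine List.isChain_cons_cons.mpr ⟨by simp [R], List.isChain_cons.mpr ⟨?_, ih⟩⟩
    intro y hy
    rw [NW_head k] at hy
    simp at hy
    subst hy
    simp [R]

lemma toWord_PW (k : ℕ) : (FreeGroup.mk (PW k)).toWord = PW k := by
  rw [FreeGroup.toWord_mk]; exact reduce_eq_self (PW_chain k)

lemma toWord_NW (k : ℕ) : (FreeGroup.mk (NW k)).toWord = NW k := by
  rw [FreeGroup.toWord_mk]; exact reduce_eq_self (NW_chain k)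

lemma mk_PW_succ (k : ℕ) :
    FreeGroup.mk (PW (k + 1)) =
      FreeGroup.of true * (FreeGroup.of false)⁻¹ * FreeGroup.mk (PW k) := rfl

lemma mk_NW_succ (k : ℕ) :
    FreeGroup.mk (NW (k + 1)) =
      FreeGroup.of false * (FreeGroup.of true)⁻¹ * FreeGroup.mk (NW k) := rfl

section Theta

variable (θ : MulAut (FreeGroup Bool))
    (h0 : θ (FreeGroup.of false) = FreeGroup.of true)
    (h1 : θ (FreeGroup.of true) =
      FreeGroup.of true * (FreeGroup.of false)⁻¹ * FreeGroup.of true)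

include h0 h1

lemma theta_PW : ∀ k : ℕ, θ (FreeGroup.mk (PW k)) = FreeGroup.mk (PW (k + 1)) := by
  intro k
  induction k with
  | zero =>
    have : FreeGroup.mk (PW 0) = FreeGroup.of true := rfl
    rw [this, h1, mk_PW_succ, this]
  | succ k ih =>
    have e1 : FreeGroup.mk (PW (k + 1 + 1)) =
        FreeGroup.of true * (FreeGroup.of false)⁻¹ * FreeGroup.mk (PW (k + 1)) :=
      mk_PW_succ (k + 1)
    rw [mk_PW_succ k, _root_.map_mul, _root_.map_mul, _root_.map_inv, h0, h1, ih, e1]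
    group

lemma theta_NW : ∀ k : ℕ, θ (FreeGroup.mk (NW (k + 1))) = FreeGroup.mk (NW k) := by
  intro k
  induction k with
  | zero =>
    have e0 : FreeGroup.mk (NW 0) = FreeGroup.of false := rfl
    rw [mk_NW_succ, e0, _root_.map_mul, _root_.map_mul, _root_.map_inv, h0, h1]
    group
  | succ k ih =>
    rw [mk_NW_succ (k + 1), _root_.map_mul, _root_.map_mul, _root_.map_inv, h0, h1, ih,
      mk_NW_succ k]
    group

lemma orbit_pos : ∀ k : ℕ, (θ ^ ((k : ℤ) + 1)) (FreeGroup.of false) = FreeGroup.mk (PW k) := by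
  intro k
  induction k with
  | zero =>
    norm_num
    rw [h0]; rfl
  | succ k ih =>
    have : ((k : ℤ) + 1) + 1 = 1 + ((k : ℤ) + 1) := by ring
    push_cast
    rw [this, zpow_add, zpow_one, MulAut.mul_apply, ih, theta_PW θ h0 h1]

lemma orbit_neg : ∀ k : ℕ, (θ ^ (-(k : ℤ))) (FreeGroup.of false) = FreeGroup.mk (NW k) := by
  intro k
  induction k with
  | zero =>
    norm_num; rfl
  | succ k ih =>
    have hexp : (-(((k : ℕ) + 1 : ℕ) : ℤ)) = -((k : ℤ) + 1) := by push_cast; ring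
    apply MulEquiv.injective θ
    rw [theta_NW θ h0 h1, hexp]
    have h2 : θ ((θ ^ (-((k : ℤ) + 1))) (FreeGroup.of false))
        = (θ ^ ((1 : ℤ) + -((k : ℤ) + 1))) (FreeGroup.of false) := by
      rw [zpow_add, zpow_one, MulAut.mul_apply]
    rw [h2]
    have h3 : (1 : ℤ) + -((k : ℤ) + 1) = -(k : ℤ) := by ring
    rw [h3, ih]

lemma orbit_words (i : ℤ) :
    ((θ ^ i) (FreeGroup.of false)).toWord = PW (i - 1).toNat ∨
    ((θ ^ i) (FreeGroup.of false)).toWord = NW (-i).toNat := by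
  rcases le_or_gt i 0 with hi | hi
  · right
    have : i = -((-i).toNat : ℤ) := by omega
    rw [this, orbit_neg θ h0 h1, toWord_NW]
    congr 1
    omega
  · left
    have : i = ((i - 1).toNat : ℤ) + 1 := by omega
    rw [this, orbit_pos θ h0 h1, toWord_PW]
    congr 2
    omega

end Theta

end Stmt12Aux

/-- Let `θ` be the automorphism of `F(a₀,a₁)` with `θ(a₀) = a₁`,
`θ(a₁) = a₁ a₀⁻¹ a₁` (here `a₀ = of false`, `a₁ = of true`), and let
`X = {θ^i(a₀) : i ∈ ℤ}`. Every element of `X` is a nonempty reduced word whose first and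
last letters are positive, and consequently every finite product of elements of `X` is
already reduced: its reduced word is the concatenation of the reduced words of the
factors. -/
theorem stmt12 (θ : MulAut (FreeGroup Bool))
    (h0 : θ (FreeGroup.of false) = FreeGroup.of true)
    (h1 : θ (FreeGroup.of true) =
      FreeGroup.of true * (FreeGroup.of false)⁻¹ * FreeGroup.of true) :
    (∀ i : ℤ, ((θ ^ i) (FreeGroup.of false)).toWord ≠ [] ∧
      (∀ p, ((θ ^ i) (FreeGroup.of false)).toWord.head? = some p → p.2 = true) ∧
      (∀ p, ((θ ^ i) (FreeGroup.of false)).toWord.getLast? = some p → p.2 = true)) ∧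
    (∀ l : List (FreeGroup Bool),
      (∀ g ∈ l, g ∈ Set.range fun i : ℤ => (θ ^ i) (FreeGroup.of false)) →
      (l.prod).toWord = (l.map FreeGroup.toWord).flatten) := by
  open Stmt12Aux in
  have key : ∀ i : ℤ, ((θ ^ i) (FreeGroup.of false)).toWord ≠ [] ∧
      (∀ p, ((θ ^ i) (FreeGroup.of false)).toWord.head? = some p → p.2 = true) ∧
      (∀ p, ((θ ^ i) (FreeGroup.of false)).toWord.getLast? = some p → p.2 = true) := by
    intro i
    rcases Stmt12Aux.orbit_words θ h0 h1 i with h | h <;> rw [h]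
    · refine ⟨Stmt12Aux.PW_ne _, ?_, ?_⟩
      · intro p hp; rw [Stmt12Aux.PW_head] at hp
        cases hp; rfl
      · intro p hp; rw [Stmt12Aux.PW_last] at hp
        cases hp; rfl
    · refine ⟨Stmt12Aux.NW_ne _, ?_, ?_⟩
      · intro p hp; rw [Stmt12Aux.NW_head] at hp
        cases hp; rfl
      · intro p hp; rw [Stmt12Aux.NW_last] at hp
        cases hp; rfl
  refine ⟨key, ?_⟩
  have main : ∀ l : List (FreeGroup Bool),
      (∀ g ∈ l, g ∈ Set.range fun i : ℤ => (θ ^ i) (FreeGroup.of false)) →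
      (l.prod).toWord = (l.map FreeGroup.toWord).flatten ∧
        (∀ q, ((l.prod).toWord).head? = some q → q.2 = true) := by
    intro l
    induction l with
    | nil => intro _; simp
    | cons g l ih =>
      intro hmem
      obtain ⟨hrest, hhead⟩ := ih (fun g' hg' => hmem g' (List.mem_cons_of_mem _ hg'))
      obtain ⟨i, hi⟩ := hmem g (List.mem_cons_self (a := g) (l := l))
      have hg : g = (θ ^ i) (FreeGroup.of false) := hi.symm
      obtain ⟨hne, hh, hl⟩ := key i
      rw [← hg] at hne hh hl
      have hmul : (g * l.prod).toWord = g.toWord ++ (l.prod).toWord := by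
        apply Stmt12Aux.toWord_mul_append
        intro p hp q hq
        simp only [Option.mem_def] at hp hq
        have hp2 := hl p hp
        have hq2 := hhead q hq
        simp [Stmt12Aux.R, hp2, hq2]
      constructor
      · rw [List.prod_cons, hmul, hrest, List.map_cons, List.flatten_cons]
      · intro q hq
        rw [List.prod_cons, hmul, List.head?_append] at hq
        obtain ⟨x, w, hxw⟩ := List.exists_cons_of_ne_nil hne
        rw [hxw] at hq
        simp at hq
        apply hh
        rw [hxw]
        simp [← hq]
  intro l hl
  exact (main l hl).1
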